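/- For the weight m_k(r) defined by m_k(r) = min{1, log(1+r²)/⟨k⟩} for k < 0 and m_k(r) = min{1, r²·2^{2k}} for k ≥ 0, where ⟨k⟩ = √(4+k²), one has ∫₀^∞ (m_k(r)/r)² · (1 + 2^k r)^{-1} r dr ≲ |k| for k < 0 with an absolute implicit constant. -/

import Mathlib

open Real MeasureTheory

open Set in
/-- For `k < 0` and `m_k(r) = min{1, log(1+r²)/⟨k⟩}` with `⟨k⟩ = √(4+k²)`, one has
`∫₀^∞ (m_k(r)/r)² (1 + 2^k r)⁻¹ r dr ≲ |k|`. -/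
theorem mk_weight_integral_bound :
    ∃ C > (0 : ℝ), ∀ k : ℤ, k < 0 →
      (∫ r in Set.Ioi (0 : ℝ),
          (min 1 (Real.log (1 + r ^ 2) / Real.sqrt (4 + (k : ℝ) ^ 2)) / r) ^ 2
            * (1 + (2 : ℝ) ^ k * r)⁻¹ * r)
        ≤ C * |(k : ℝ)| := by
  refine ⟨2, by norm_num, fun k hk => ?_⟩
  set c : ℝ := (2 : ℝ) ^ k with hc
  have hc0 : 0 < c := zpow_pos (by norm_num) k
  have hk1 : (k : ℝ) ≤ -1 := by exact_mod_cast (by omega : k ≤ -1)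
  have hcle : c ≤ 2⁻¹ := by
    have : ((2:ℝ):ℝ) ^ (k:ℝ) ≤ (2:ℝ) ^ (-1:ℝ) := by
      apply Real.rpow_le_rpow_of_exponent_le (by norm_num) hk1
    rw [Real.rpow_intCast] at this
    simpa [Real.rpow_neg_one] using this
  have hT : 2 ≤ c⁻¹ := by
    rw [le_inv_comm₀ (by norm_num) hc0]
    exact hcle
  have hT0 : (0:ℝ) < c⁻¹ := by positivity
  have hs2 : (2:ℝ) ≤ Real.sqrt (4 + (k : ℝ) ^ 2) := by
    rw [show (2:ℝ) = Real.sqrt 4 by rw [show (4:ℝ) = 2^2 by norm_num, Real.sqrt_sq]; norm_num]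
    exact Real.sqrt_le_sqrt (by nlinarith)
  set f : ℝ → ℝ := fun r =>
    (min 1 (Real.log (1 + r ^ 2) / Real.sqrt (4 + (k : ℝ) ^ 2)) / r) ^ 2
      * (1 + c * r)⁻¹ * r with hf
  set g : ℝ → ℝ := fun r =>
    if r ≤ 1 then r ^ 3 else if r ≤ c⁻¹ then r⁻¹ else c⁻¹ * r ^ (-2 : ℝ) with hg
  -- pointwise bounds
  have key : ∀ r ∈ Ioi (0:ℝ), f r ≤ g r := by
    intro r hr
    simp only [mem_Ioi] at hr
    have hL0 : 0 ≤ Real.log (1 + r ^ 2) := Real.log_nonneg (by nlinarith)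
    have hLr : Real.log (1 + r ^ 2) ≤ r ^ 2 := by
      have := Real.log_le_sub_one_of_pos (x := 1 + r ^ 2) (by positivity)
      linarith
    have hM0 : 0 ≤ min 1 (Real.log (1 + r ^ 2) / Real.sqrt (4 + (k : ℝ) ^ 2)) :=
      le_min zero_le_one (by positivity)
    have h1cr : (1:ℝ) ≤ 1 + c * r := by nlinarith
    have hinv1 : (1 + c * r)⁻¹ ≤ 1 := inv_le_one_of_one_le₀ h1cr
    have hinv0 : (0:ℝ) ≤ (1 + c * r)⁻¹ := by positivity
    simp only [hf, hg]
    by_cases h1 : r ≤ 1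
    · rw [if_pos h1]
      have hM : min 1 (Real.log (1 + r ^ 2) / Real.sqrt (4 + (k : ℝ) ^ 2))
          ≤ r ^ 2 / 2 := by
        refine (min_le_right _ _).trans ?_
        exact div_le_div₀ (sq_nonneg r) hLr (by norm_num) hs2
      calc (min 1 (Real.log (1 + r ^ 2) / Real.sqrt (4 + (k : ℝ) ^ 2)) / r) ^ 2
            * (1 + c * r)⁻¹ * r
          ≤ (r ^ 2 / 2 / r) ^ 2 * 1 * r := by
            apply mul_le_mul ?_ le_rfl hr.le (by positivity)
            apply mul_le_mul ?_ hinv1 hinv0 (by positivity)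
            apply pow_le_pow_left₀ (by positivity) (div_le_div_of_nonneg_right hM hr.le) 2
          _ = r ^ 3 / 4 := by field_simp; ring
          _ ≤ r ^ 3 := by nlinarith
    · rw [if_neg h1]
      push_neg at h1
      have hMle1 : min 1 (Real.log (1 + r ^ 2) / Real.sqrt (4 + (k : ℝ) ^ 2)) ≤ 1 :=
        min_le_left _ _
      have hsq : (min 1 (Real.log (1 + r ^ 2) / Real.sqrt (4 + (k : ℝ) ^ 2)) / r) ^ 2
          ≤ (1 / r) ^ 2 := by
        apply pow_le_pow_left₀ (by positivity) (div_le_div_of_nonneg_right hMle1 hr.le) 2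
      by_cases h2 : r ≤ c⁻¹
      · rw [if_pos h2]
        calc (min 1 (Real.log (1 + r ^ 2) / Real.sqrt (4 + (k : ℝ) ^ 2)) / r) ^ 2
              * (1 + c * r)⁻¹ * r
            ≤ (1 / r) ^ 2 * 1 * r := by
              apply mul_le_mul ?_ le_rfl hr.le (by positivity)
              exact mul_le_mul hsq hinv1 hinv0 (by positivity)
          _ = r⁻¹ := by field_simp
      · rw [if_neg h2]
        have hinvcr : (1 + c * r)⁻¹ ≤ (c * r)⁻¹ := by
          apply inv_anti₀ (by positivity) (by linarith)
        calc (min 1 (Real.log (1 + r ^ 2) / Real.sqrt (4 + (k : ℝ) ^ 2)) / r) ^ 2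
              * (1 + c * r)⁻¹ * r
            ≤ (1 / r) ^ 2 * (c * r)⁻¹ * r := by
              apply mul_le_mul ?_ le_rfl hr.le (by positivity)
              exact mul_le_mul hsq hinvcr hinv0 (by positivity)
          _ = c⁻¹ * r ^ (-2 : ℝ) := by
              rw [Real.rpow_neg hr.le, show (2:ℝ) = ((2:ℕ):ℝ) by norm_num,
                Real.rpow_natCast]
              field_simp
  -- integrability pieces
  have eq1 : EqOn g (fun r => r ^ 3) (Ioc (0:ℝ) 1) := fun r hr => by
    simp only [hg, if_pos hr.2]
  have eq2 : EqOn g (fun r => r⁻¹) (Ioc (1:ℝ) c⁻¹) := fun r hr => by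
    simp only [hg, if_neg (not_le.mpr hr.1), if_pos hr.2]
  have eq3 : EqOn g (fun r => c⁻¹ * r ^ (-2:ℝ)) (Ioi c⁻¹) := fun r hr => by
    simp only [mem_Ioi] at hr
    have h1 : ¬ r ≤ 1 := not_le.mpr (lt_of_le_of_lt (by linarith) hr)
    simp only [hg, if_neg h1, if_neg (not_le.mpr hr)]
  have int1 : IntegrableOn g (Ioc (0:ℝ) 1) := by
    apply (IntegrableOn.congr_fun ?_ eq1.symm measurableSet_Ioc)
    exact ((continuous_pow 3).integrableOn_Icc).mono_set Ioc_subset_Icc_self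
  have int2 : IntegrableOn g (Ioc (1:ℝ) c⁻¹) := by
    apply (IntegrableOn.congr_fun ?_ eq2.symm measurableSet_Ioc)
    refine (ContinuousOn.integrableOn_Icc ?_).mono_set Ioc_subset_Icc_self
    exact continuousOn_inv₀.mono (fun x hx => by simp; nlinarith [hx.1])
  have int3 : IntegrableOn g (Ioi c⁻¹) := by
    apply (IntegrableOn.congr_fun ?_ eq3.symm measurableSet_Ioi)
    exact (integrableOn_Ioi_rpow_of_lt (by norm_num) hT0).const_mul c⁻¹
  have hunion1 : Ioc (0:ℝ) 1 ∪ Ioc 1 c⁻¹ = Ioc 0 c⁻¹ :=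
    Ioc_union_Ioc_eq_Ioc zero_le_one (by linarith)
  have hunion2 : Ioc (0:ℝ) c⁻¹ ∪ Ioi c⁻¹ = Ioi 0 := Ioc_union_Ioi_eq_Ioi (by linarith)
  have int12 : IntegrableOn g (Ioc (0:ℝ) c⁻¹) := by
    rw [← hunion1]; exact int1.union int2
  have intg : IntegrableOn g (Ioi (0:ℝ)) := by
    rw [← hunion2]; exact int12.union int3
  -- compare
  have hle : (∫ r in Ioi (0:ℝ), f r) ≤ ∫ r in Ioi (0:ℝ), g r := by
    apply integral_mono_of_nonneg
    · filter_upwards [ae_restrict_mem measurableSet_Ioi] with r hr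
      simp only [mem_Ioi] at hr
      have : (0:ℝ) < 1 + c * r := by nlinarith
      simp only [hf]
      exact mul_nonneg (mul_nonneg (sq_nonneg _) (inv_nonneg.mpr this.le)) hr.le
    · exact intg
    · filter_upwards [ae_restrict_mem measurableSet_Ioi] with r hr
      exact key r hr
  -- compute ∫ g
  have split : (∫ r in Ioi (0:ℝ), g r)
      = (∫ r in Ioc (0:ℝ) 1, g r) + (∫ r in Ioc (1:ℝ) c⁻¹, g r) + (∫ r in Ioi c⁻¹, g r) := by
    rw [← hunion2, setIntegral_union (Ioc_disjoint_Ioi le_rfl) measurableSet_Ioi int12 int3,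
      ← hunion1, setIntegral_union (Ioc_disjoint_Ioc.mpr (by simp)) measurableSet_Ioc int1 int2]
  have I1 : (∫ r in Ioc (0:ℝ) 1, g r) = 1/4 := by
    rw [setIntegral_congr_fun measurableSet_Ioc eq1,
      ← intervalIntegral.integral_of_le zero_le_one, integral_pow]
    norm_num
  have I2 : (∫ r in Ioc (1:ℝ) c⁻¹, g r) = Real.log c⁻¹ := by
    rw [setIntegral_congr_fun measurableSet_Ioc eq2,
      ← intervalIntegral.integral_of_le (by linarith), integral_inv_of_pos one_pos hT0]
    simp
  have I3 : (∫ r in Ioi c⁻¹, g r) = 1 := by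
    rw [setIntegral_congr_fun measurableSet_Ioi eq3, integral_const_mul,
      integral_Ioi_rpow_of_lt (by norm_num) hT0]
    rw [show (-2:ℝ) + 1 = -1 by norm_num, Real.rpow_neg_one]
    field_simp
  have hlog : Real.log c⁻¹ = -((k:ℝ) * Real.log 2) := by
    rw [Real.log_inv, hc, Real.log_zpow]
  have habs : |(k:ℝ)| = -(k:ℝ) := abs_of_neg (by exact_mod_cast hk)
  have hlog2 : Real.log 2 < 0.6931471808 := Real.log_two_lt_d9
  have hlog2' : 0 < Real.log 2 := Real.log_pos (by norm_num)
  calc (∫ r in Ioi (0:ℝ), f r) ≤ ∫ r in Ioi (0:ℝ), g r := hle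
    _ = 1/4 + Real.log c⁻¹ + 1 := by rw [split, I1, I2, I3]
    _ ≤ 2 * |(k:ℝ)| := by rw [hlog, habs]; nlinarith
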